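/- Let $k : V \times V \to \mathbb{R}$ be positive definite with RKHS $\mathscr{H}$, and suppose $\delta_{x_1} \in \mathscr{H}$ and all finite Gram matrices $K_F$ are invertible. Then $\sup_{F} (K_F^{-1}\delta_{x_1})(x_1) = \|\delta_{x_1}\|_{\mathscr{H}}^2$, where the supremum is over all finite subsets $F$ of $V$ containing $x_1$. -/

import Mathlib

open Matrix

/-- Auxiliary: for each finite `F ∋ x1`, the vector `h_F = Σ c_i K_i` with
`c = K_F⁻¹ δ` lies in the span, satisfies `(K_F⁻¹ δ) x1 = ‖h_F‖²`, and
`g - h_F` is orthogonal to the span. -/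
lemma stmt4_aux {V H : Type*} [DecidableEq V]
    [NormedAddCommGroup H] [InnerProductSpace ℝ H]
    (k : V → V → ℝ) (K : V → H)
    (hk : ∀ x y, (inner ℝ (K x) (K y) : ℝ) = k x y)
    (x1 : V) (g : H)
    (hg : ∀ x, (inner ℝ (K x) g : ℝ) = if x = x1 then 1 else 0)
    (F : Finset V) (hF : x1 ∈ F)
    (hinvF : IsUnit (Matrix.of fun i j : F => k i j)) :
    ∃ h ∈ Submodule.span ℝ (K '' ↑F),
      ((Matrix.of fun i j : F => k i j)⁻¹ *ᵥ
          fun i : F => if (i : V) = x1 then (1 : ℝ) else 0) ⟨x1, hF⟩ = ‖h‖ ^ 2 ∧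
      ∀ v ∈ Submodule.span ℝ (K '' (↑F : Set V)), (inner ℝ (g - h) v : ℝ) = 0 := by
  classical
  set M : Matrix F F ℝ := Matrix.of fun i j : F => k i j with hM
  set d : F → ℝ := fun i => if (i : V) = x1 then (1 : ℝ) else 0 with hd
  set c : F → ℝ := M⁻¹ *ᵥ d with hc
  have hdet : IsUnit M.det := (Matrix.isUnit_iff_isUnit_det M).mp hinvF
  have hMc : M *ᵥ c = d := by
    rw [hc, Matrix.mulVec_mulVec, Matrix.mul_nonsing_inv _ hdet, Matrix.one_mulVec]
  set h : H := ∑ i : F, c i • K i with hh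
  have hKh : ∀ j : F, (inner ℝ (K j) h : ℝ) = d j := by
    intro j
    rw [hh, inner_sum]
    have e1 : ∀ i : F, (inner ℝ (K (j : V)) (c i • K i) : ℝ) = M j i * c i := by
      intro i
      rw [real_inner_smul_right, hk]
      simp [hM, mul_comm]
    rw [Finset.sum_congr rfl fun i _ => e1 i, ← hMc]
    rfl
  have hKg : ∀ j : F, (inner ℝ (K (j : V)) g : ℝ) = d j := by
    intro j; rw [hg]
  have hmem : h ∈ Submodule.span ℝ (K '' (↑F : Set V)) := by
    rw [hh]
    refine Submodule.sum_mem _ fun i _ => Submodule.smul_mem _ _ ?_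
    exact Submodule.subset_span ⟨i, i.2, rfl⟩
  have horth : ∀ v ∈ Submodule.span ℝ (K '' (↑F : Set V)), (inner ℝ (g - h) v : ℝ) = 0 := by
    intro v hv
    have hle : Submodule.span ℝ (K '' (↑F : Set V)) ≤
        LinearMap.ker ((innerSL ℝ (g - h)).toLinearMap) := by
      rw [Submodule.span_le]
      rintro _ ⟨j, hj, rfl⟩
      simp only [SetLike.mem_coe, LinearMap.mem_ker, ContinuousLinearMap.coe_coe,
        innerSL_apply_apply]
      have : (inner ℝ (K j) (g - h) : ℝ) = 0 := by
        rw [inner_sub_right, hKg ⟨j, hj⟩, hKh ⟨j, hj⟩, sub_self]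
      rw [real_inner_comm]; exact this
    have h2 := hle hv
    rw [inner_sub_left]
    simpa using h2
  refine ⟨h, hmem, ?_, horth⟩
  have hnorm : ‖h‖ ^ 2 = (inner ℝ h h : ℝ) := (real_inner_self_eq_norm_sq h).symm
  have e2 : (inner ℝ h h : ℝ) = ∑ j : F, c j * d j := by
    nth_rewrite 1 [hh]
    rw [sum_inner]
    exact Finset.sum_congr rfl fun j _ => by rw [real_inner_smul_left, hKh j]
  have e3 : ∑ j : F, c j * d j = c ⟨x1, hF⟩ := by
    have : ∀ j : F, c j * d j = if j = ⟨x1, hF⟩ then c j else 0 := by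
      intro j
      simp only [hd]
      by_cases hj : (j : V) = x1
      · rw [if_pos hj, if_pos (Subtype.ext hj), mul_one]
      · rw [if_neg hj, if_neg (fun hjx => hj (by rw [hjx])), mul_zero]
    rw [Finset.sum_congr rfl fun j _ => this j, Finset.sum_ite_eq' Finset.univ]
    simp
  rw [hnorm, e2, e3]

theorem stmt_4 {V H : Type*} [Countable V] [DecidableEq V]
    [NormedAddCommGroup H] [InnerProductSpace ℝ H] [CompleteSpace H]
    (k : V → V → ℝ) (K : V → H)
    (hk : ∀ x y, (inner ℝ (K x) (K y) : ℝ) = k x y)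
    (hdense : (Submodule.span ℝ (Set.range K)).topologicalClosure = ⊤)
    (hinv : ∀ F : Finset V, IsUnit (Matrix.of fun i j : F => k i j))
    (x1 : V) (g : H)
    (hg : ∀ x, (inner ℝ (K x) g : ℝ) = if x = x1 then 1 else 0) :
    (⨆ F : {F : Finset V // x1 ∈ F},
        ((Matrix.of fun i j : F.1 => k i j)⁻¹ *ᵥ
          fun i : F.1 => if (i : V) = x1 then (1 : ℝ) else 0) ⟨x1, F.2⟩)
      = ‖g‖ ^ 2 := by
  classical
  haveI : Nonempty {F : Finset V // x1 ∈ F} := ⟨⟨{x1}, Finset.mem_singleton_self x1⟩⟩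
  set φ : {F : Finset V // x1 ∈ F} → ℝ := fun F =>
    ((Matrix.of fun i j : F.1 => k i j)⁻¹ *ᵥ
      fun i : F.1 => if (i : V) = x1 then (1 : ℝ) else 0) ⟨x1, F.2⟩ with hφ
  have key := fun F : {F : Finset V // x1 ∈ F} =>
    stmt4_aux k K hk x1 g hg F.1 F.2 (hinv F.1)
  choose h hmem hval horth using key
  have hval' : ∀ F, φ F = ‖h F‖ ^ 2 := hval
  have pyth : ∀ F, ‖g‖ ^ 2 = ‖g - h F‖ ^ 2 + ‖h F‖ ^ 2 := by
    intro F
    have h0 : (inner ℝ (g - h F) (h F) : ℝ) = 0 := horth F _ (hmem F)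
    have hgdec : g = (g - h F) + h F := by abel
    calc ‖g‖ ^ 2 = ‖(g - h F) + h F‖ ^ 2 := by rw [← hgdec]
    _ = ‖g - h F‖ ^ 2 + 2 * inner ℝ (g - h F) (h F) + ‖h F‖ ^ 2 := norm_add_sq_real _ _
    _ = ‖g - h F‖ ^ 2 + ‖h F‖ ^ 2 := by rw [h0]; ring
  have hub : ∀ F, φ F ≤ ‖g‖ ^ 2 := by
    intro F
    rw [hval' F, pyth F]
    nlinarith [sq_nonneg ‖g - h F‖]
  have hbdd : BddAbove (Set.range φ) := ⟨‖g‖ ^ 2, by rintro _ ⟨F, rfl⟩; exact hub F⟩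
  refine le_antisymm (ciSup_le hub) (le_of_forall_pos_le_add ?_)
  intro ε hε
  -- density: find v ∈ span (range K) with ‖g - v‖ < √ε
  have hclos : g ∈ closure ((Submodule.span ℝ (Set.range K) : Submodule ℝ H) : Set H) := by
    have : g ∈ (Submodule.span ℝ (Set.range K)).topologicalClosure := by
      rw [hdense]; trivial
    exact this
  have hsqrt : (0 : ℝ) < Real.sqrt ε := Real.sqrt_pos.mpr hε
  obtain ⟨v, hv, hvg⟩ := Metric.mem_closure_iff.mp hclos _ hsqrt
  rw [dist_eq_norm] at hvg
  obtain ⟨t, hts, hvt⟩ := Submodule.mem_span_finite_of_mem_span hv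
  -- build a finite set F₀ ⊆ V with ↑t ⊆ K '' F₀
  have hchoice : ∀ y ∈ t, ∃ x, K x = y := fun y hy => hts hy
  choose f hf using hchoice
  set F0 : Finset V := t.attach.image (fun y => f y.1 y.2) with hF0
  have htF0 : (↑t : Set H) ⊆ K '' (↑F0 : Set V) := by
    intro y hy
    exact ⟨f y hy, by simp [hF0]; exact ⟨y, hy, rfl⟩, hf y hy⟩
  set Fs : {F : Finset V // x1 ∈ F} := ⟨insert x1 F0, Finset.mem_insert_self x1 F0⟩ with hFs
  have hvF : v ∈ Submodule.span ℝ (K '' (↑Fs.1 : Set V)) := by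
    refine Submodule.span_mono ?_ hvt
    refine htF0.trans (Set.image_mono ?_)
    intro x hx
    simp [hFs, Finset.mem_insert]
    right
    exact hx
  -- ‖g - h Fs‖² ≤ ‖g - v‖² < ε
  have h0 : (inner ℝ (g - h Fs) (h Fs - v) : ℝ) = 0 :=
    horth Fs _ (Submodule.sub_mem _ (hmem Fs) hvF)
  have hgvdec : g - v = (g - h Fs) + (h Fs - v) := by abel
  have hle1 : ‖g - h Fs‖ ^ 2 ≤ ‖g - v‖ ^ 2 := by
    calc ‖g - h Fs‖ ^ 2 ≤ ‖g - h Fs‖ ^ 2 + ‖h Fs - v‖ ^ 2 := by nlinarith [sq_nonneg ‖h Fs - v‖]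
    _ = ‖(g - h Fs) + (h Fs - v)‖ ^ 2 := by rw [norm_add_sq_real, h0]; ring
    _ = ‖g - v‖ ^ 2 := by rw [← hgvdec]
  have hle2 : ‖g - v‖ ^ 2 < ε := by
    have hs : Real.sqrt ε ^ 2 = ε := Real.sq_sqrt hε.le
    nlinarith [norm_nonneg (g - v)]
  have hφFs : φ Fs ≤ ⨆ F, φ F := le_ciSup hbdd Fs
  have : ‖g‖ ^ 2 = ‖g - h Fs‖ ^ 2 + φ Fs := by rw [hval' Fs, pyth Fs]
  linarith
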